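/- arXiv:2411.16978 — 3 statements merged into one kernel-verified Lean document; each statement's English description precedes it below -/
import Mathlib

section
/- Let F₁, F₂, A be sub-σ-algebras of F. If A is independent of the σ-algebra σ(F₁ ∪ F₂), then the β-mixing coefficient satisfies β(F₁, σ(A ∪ F₂)) ≤ β(F₁, F₂). -/
open MeasureTheory ProbabilityTheory

/-- A finite measurable partition of `Ω` into sets measurable w.r.t. a sub-σ-algebra `F`. -/
def IsFinMeasPartition {Ω : Type*} (F : MeasurableSpace Ω) {n : ℕ} (A : Fin n → Set Ω) : Prop :=
  (∀ i, MeasurableSet[F] (A i)) ∧ Pairwise (Function.onFun Disjoint A) ∧ (⋃ i, A i) = Set.univ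

/-- The β-mixing (absolute regularity) coefficient between two sub-σ-algebras:
the supremum over finite measurable partitions `{A_i} ⊂ F₁`, `{B_j} ⊂ F₂` of
`(1/2) Σ_i Σ_j |P(A_i ∩ B_j) − P(A_i) P(B_j)|`. -/
noncomputable def betaMix {Ω : Type*} {mΩ : MeasurableSpace Ω} (μ : Measure Ω)
    (F₁ F₂ : MeasurableSpace Ω) : ℝ :=
  sSup { r : ℝ | ∃ (nA nB : ℕ) (A : Fin nA → Set Ω) (B : Fin nB → Set Ω),
    IsFinMeasPartition F₁ A ∧ IsFinMeasPartition F₂ B ∧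
    r = (1 / 2) * ∑ i : Fin nA, ∑ j : Fin nB,
      |(μ (A i ∩ B j)).toReal - (μ (A i)).toReal * (μ (B j)).toReal| }

section aux
variable {Ω : Type*} [m : MeasurableSpace Ω] {μ : Measure Ω} [IsProbabilityMeasure μ]

lemma sum_measure_partition {n : ℕ} {F : MeasurableSpace Ω} (hF : F ≤ m)
    {A : Fin n → Set Ω} (hA : IsFinMeasPartition F A) (t : Set Ω) (ht : MeasurableSet[m] t) :
    ∑ i, (μ (A i ∩ t)).toReal = (μ t).toReal := by
  have hmeas : ∀ i, MeasurableSet[m] (A i ∩ t) := fun i => (hF _ (hA.1 i)).inter ht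
  have hdisj : Pairwise (Function.onFun Disjoint (fun i => A i ∩ t)) := fun i j hij =>
    ((hA.2.1 hij).mono Set.inter_subset_left Set.inter_subset_left)
  have h1 : μ (⋃ i, A i ∩ t) = ∑' i, μ (A i ∩ t) := measure_iUnion hdisj hmeas
  rw [← Set.iUnion_inter, hA.2.2, Set.univ_inter] at h1
  rw [h1, tsum_fintype, ENNReal.toReal_sum (fun i _ => measure_ne_top μ _)]

lemma trivPartition (F : MeasurableSpace Ω) :
    IsFinMeasPartition F (fun _ : Fin 1 => (Set.univ : Set Ω)) :=
  ⟨fun _ => MeasurableSet.univ, fun i j h => absurd (Subsingleton.elim i j) h, by rw [Set.iUnion_const]⟩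

end aux

section key
variable {Ω : Type*} [m : MeasurableSpace Ω] {μ : Measure Ω} [IsProbabilityMeasure μ]

set_option maxHeartbeats 1000000 in
lemma condexp_setIntegral_join {F₁ F₂ A : MeasurableSpace Ω}
    (hF₁ : F₁ ≤ m) (hF₂ : F₂ ≤ m) (hA : A ≤ m)
    (hindep : @Indep Ω A (F₁ ⊔ F₂) m μ)
    {s : Set Ω} (hs : MeasurableSet[F₁] s) :
    ∀ C, MeasurableSet[A ⊔ F₂] C →
      ∫ x in C, (μ[s.indicator (fun _ => (1:ℝ)) | F₂]) x ∂μ = (μ (s ∩ C)).toReal := by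
  have hm' : A ⊔ F₂ ≤ m := sup_le hA hF₂
  letI mm : MeasurableSpace Ω := m
  set f : Ω → ℝ := s.indicator (fun _ => (1:ℝ)) with hf
  set g : Ω → ℝ := μ[f | F₂] with hg
  have hsm : MeasurableSet[m] s := hF₁ _ hs
  have hfint : Integrable f μ := (integrable_const (1:ℝ)).indicator hsm
  have hgint : Integrable g μ := integrable_condExp
  have hI : ∀ t1 t2, MeasurableSet[A] t1 → MeasurableSet[F₁ ⊔ F₂] t2 →
      μ (t1 ∩ t2) = μ t1 * μ t2 := by
    rw [Indep_iff] at hindep; exact hindep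
  -- the π-system generating A ⊔ F₂
  set S : Set (Set Ω) :=
    {t | ∃ a b, MeasurableSet[A] a ∧ MeasurableSet[F₂] b ∧ t = a ∩ b} with hS
  have h_eq : (A ⊔ F₂ : MeasurableSpace Ω) = MeasurableSpace.generateFrom S := by
    refine le_antisymm (sup_le ?_ ?_) ?_
    · intro t ht
      exact MeasurableSpace.measurableSet_generateFrom
        ⟨t, Set.univ, ht, MeasurableSet.univ, by simp⟩
    · intro t ht
      exact MeasurableSpace.measurableSet_generateFrom
        ⟨Set.univ, t, MeasurableSet.univ, ht, by simp⟩
    · rw [MeasurableSpace.generateFrom_le_iff]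
      rintro t ⟨a, b, ha, hb, rfl⟩
      exact ((le_sup_left : A ≤ A ⊔ F₂) _ ha).inter ((le_sup_right : F₂ ≤ A ⊔ F₂) _ hb)
  have h_pi : IsPiSystem S := by
    rintro t1 ⟨a1, b1, ha1, hb1, rfl⟩ t2 ⟨a2, b2, ha2, hb2, rfl⟩ -
    exact ⟨a1 ∩ a2, b1 ∩ b2, ha1.inter ha2, hb1.inter hb2, by
      rw [Set.inter_inter_inter_comm]⟩
  have hint_g : ∫ x, g x ∂μ = (μ s).toReal := by
    rw [hg, integral_condExp hF₂]
    exact integral_indicator_one hsm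
  refine MeasurableSpace.induction_on_inter (m := A ⊔ F₂) h_eq h_pi ?_ ?_ ?_ ?_
  · simp
  · rintro t ⟨a, b, ha, hb, rfl⟩
    have ham : MeasurableSet[m] a := hA _ ha
    have hbm : MeasurableSet[m] b := hF₂ _ hb
    set X : Ω → ℝ := a.indicator (fun _ => (1:ℝ)) with hX
    set Y : Ω → ℝ := b.indicator g with hY
    have hXmeas : Measurable[A] X :=
      (measurable_const : Measurable[A] (fun _ : Ω => (1:ℝ))).indicator ha
    have hYmeas : Measurable[F₂] Y :=
      (stronglyMeasurable_condExp.measurable).indicator hb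
    have hXY : IndepFun X Y μ := by
      rw [indepFun_iff_measure_inter_preimage_eq_mul]
      intro u v hu hv
      exact hI _ _ (hXmeas hu) ((le_sup_right : F₂ ≤ F₁ ⊔ F₂) _ (hYmeas hv))
    have hXint : Integrable X μ := (integrable_const (1:ℝ)).indicator ham
    have hYint : Integrable Y μ := hgint.indicator hbm
    have hprod : ∀ x, (a ∩ b).indicator g x = X x * Y x := by
      intro x
      by_cases hxa : x ∈ a <;> by_cases hxb : x ∈ b <;>
        simp [hX, hY, Set.indicator_apply, hxa, hxb]
    have hYval : ∫ x, Y x ∂μ = (μ (s ∩ b)).toReal := by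
      have h0 : ∫ x, Y x ∂μ = ∫ x in b, g x ∂μ := integral_indicator hbm
      have h1 : ∫ x in b, g x ∂μ = ∫ x in b, f x ∂μ := setIntegral_condExp hF₂ hfint hb
      have h2 : ∫ x in b, f x ∂μ = ∫ x in b ∩ s, (1:ℝ) ∂μ := setIntegral_indicator hsm
      rw [h0, h1, h2, setIntegral_const, Set.inter_comm b s]
      simp
      rfl
    calc ∫ x in a ∩ b, g x ∂μ = ∫ x, (a ∩ b).indicator g x ∂μ := by
          rw [integral_indicator (ham.inter hbm)]
      _ = ∫ x, X x * Y x ∂μ := by simp_rw [hprod]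
      _ = (∫ x, X x ∂μ) * ∫ x, Y x ∂μ := hXY.integral_mul_eq_mul_integral hXint.aestronglyMeasurable hYint.aestronglyMeasurable
      _ = (μ a).toReal * (μ (s ∩ b)).toReal := by
          have hXval : ∫ x, X x ∂μ = (μ a).toReal := integral_indicator_one ham
          rw [hXval, hYval]
      _ = (μ (s ∩ (a ∩ b))).toReal := by
          have : s ∩ (a ∩ b) = a ∩ (s ∩ b) := by ext x; simp; tauto
          rw [this, hI a (s ∩ b) ha
            (((le_sup_left : F₁ ≤ F₁ ⊔ F₂) _ hs).inter ((le_sup_right : F₂ ≤ F₁ ⊔ F₂) _ hb)),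
            ENNReal.toReal_mul]
  · intro t ht hPt
    have htm : MeasurableSet[m] t := hm' _ ht
    have hadd : ∫ x in t, g x ∂μ + ∫ x in tᶜ, g x ∂μ = ∫ x, g x ∂μ :=
      integral_add_compl htm hgint
    have hmeasadd : μ (s ∩ t) + μ (s \ t) = μ s := measure_inter_add_diff s htm
    have h1 : (μ (s ∩ t)).toReal + (μ (s \ t)).toReal = (μ s).toReal := by
      rw [← ENNReal.toReal_add (measure_ne_top μ _) (measure_ne_top μ _), hmeasadd]
    have h2 : s ∩ tᶜ = s \ t := by rw [Set.diff_eq]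
    rw [h2]
    linarith [hadd, hint_g, hPt, h1]
  · intro t hdisj htmeas hPt
    have htm : ∀ i, MeasurableSet[m] (t i) := fun i => hm' _ (htmeas i)
    have h1 : ∫ x in ⋃ n, t n, g x ∂μ = ∑' n, ∫ x in t n, g x ∂μ :=
      integral_iUnion htm hdisj hgint.integrableOn
    have h2 : μ (s ∩ ⋃ n, t n) = ∑' n, μ (s ∩ t n) := by
      rw [Set.inter_iUnion]
      exact measure_iUnion
        (fun i j hij => ((hdisj hij).mono Set.inter_subset_right Set.inter_subset_right))
        (fun i => hsm.inter (htm i))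
    rw [h1, h2, ENNReal.tsum_toReal_eq (fun n => measure_ne_top μ _)]
    exact tsum_congr hPt

end key

section bound
variable {Ω : Type*} [m : MeasurableSpace Ω] {μ : Measure Ω} [IsProbabilityMeasure μ]

lemma partition_sum_le_one {F₁ F₂ : MeasurableSpace Ω} (hF₁ : F₁ ≤ m) (hF₂ : F₂ ≤ m)
    {n1 n2 : ℕ} {A : Fin n1 → Set Ω} {B : Fin n2 → Set Ω}
    (hA : IsFinMeasPartition F₁ A) (hB : IsFinMeasPartition F₂ B) :
    ∑ i, ∑ j, |(μ (A i ∩ B j)).toReal - (μ (A i)).toReal * (μ (B j)).toReal| ≤ 2 := by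
  letI mm : MeasurableSpace Ω := m
  have hx : ∀ i, ∑ j, (μ (A i ∩ B j)).toReal = (μ (A i)).toReal := by
    intro i
    have : ∀ j, (μ (A i ∩ B j)).toReal = (μ (B j ∩ A i)).toReal := fun j => by
      rw [Set.inter_comm]
    simp_rw [this]
    exact sum_measure_partition (μ := μ) hF₂ hB _ (hF₁ _ (hA.1 i))
  have hAx : ∑ i, (μ (A i)).toReal = 1 := by
    have h := sum_measure_partition (μ := μ) hF₁ hA Set.univ MeasurableSet.univ
    simpa [measure_univ] using h
  have hBx : ∑ j, (μ (B j)).toReal = 1 := by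
    have h := sum_measure_partition (μ := μ) hF₂ hB Set.univ MeasurableSet.univ
    simpa [measure_univ] using h
  have h1 : ∀ i j, |(μ (A i ∩ B j)).toReal - (μ (A i)).toReal * (μ (B j)).toReal|
      ≤ (μ (A i ∩ B j)).toReal + (μ (A i)).toReal * (μ (B j)).toReal := fun i j =>
    (abs_sub _ _).trans (by
      rw [abs_of_nonneg ENNReal.toReal_nonneg,
        abs_of_nonneg (mul_nonneg ENNReal.toReal_nonneg ENNReal.toReal_nonneg)])
  calc ∑ i, ∑ j, |(μ (A i ∩ B j)).toReal - (μ (A i)).toReal * (μ (B j)).toReal|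
      ≤ ∑ i, ∑ j, ((μ (A i ∩ B j)).toReal + (μ (A i)).toReal * (μ (B j)).toReal) :=
        Finset.sum_le_sum fun i _ => Finset.sum_le_sum fun j _ => h1 i j
    _ = (∑ i, ∑ j, (μ (A i ∩ B j)).toReal)
        + ∑ i, ∑ j, (μ (A i)).toReal * (μ (B j)).toReal := by
        rw [← Finset.sum_add_distrib]
        exact Finset.sum_congr rfl fun i _ => by rw [← Finset.sum_add_distrib]
    _ ≤ 2 := by
        have e1 : ∑ i, ∑ j, (μ (A i ∩ B j)).toReal = 1 := by
          rw [Finset.sum_congr rfl fun i _ => hx i, hAx]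
        have e2 : ∑ i, ∑ j, (μ (A i)).toReal * (μ (B j)).toReal = 1 := by
          have e3 : ∀ i, ∑ j, (μ (A i)).toReal * (μ (B j)).toReal = (μ (A i)).toReal := by
            intro i; rw [← Finset.mul_sum, hBx, mul_one]
          rw [Finset.sum_congr rfl fun i _ => e3 i, hAx]
        rw [e1, e2]; norm_num

end bound


set_option maxHeartbeats 1000000 in
/-- If `A` is independent of `σ(F₁ ∪ F₂)`, then `β(F₁, σ(A ∪ F₂)) ≤ β(F₁, F₂)`. -/
theorem betaMix_sup_le_of_indep {Ω : Type*} [m : MeasurableSpace Ω]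
    (μ : Measure Ω) [IsProbabilityMeasure μ]
    (F₁ F₂ A : MeasurableSpace Ω) (hF₁ : F₁ ≤ m) (hF₂ : F₂ ≤ m) (hA : A ≤ m)
    (hindep : @Indep Ω A (F₁ ⊔ F₂) m μ) :
    betaMix μ F₁ (A ⊔ F₂) ≤ betaMix μ F₁ F₂ := by
  classical
  have hm' : A ⊔ F₂ ≤ m := sup_le hA hF₂
  letI mm : MeasurableSpace Ω := m
  -- the target set is bounded above by 1 and contains 0
  have hbdd : BddAbove { r : ℝ | ∃ (nA nB : ℕ) (Ap : Fin nA → Set Ω) (Bp : Fin nB → Set Ω),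
      IsFinMeasPartition F₁ Ap ∧ IsFinMeasPartition F₂ Bp ∧
      r = (1 / 2) * ∑ i : Fin nA, ∑ j : Fin nB,
        |(μ (Ap i ∩ Bp j)).toReal - (μ (Ap i)).toReal * (μ (Bp j)).toReal| } := by
    refine ⟨1, ?_⟩
    rintro r ⟨nA', nB', Ap, Bp, hAp, hBp, rfl⟩
    have := partition_sum_le_one (μ := μ) hF₁ hF₂ hAp hBp
    linarith
  have h0mem : (0:ℝ) ∈ { r : ℝ | ∃ (nA nB : ℕ) (Ap : Fin nA → Set Ω) (Bp : Fin nB → Set Ω),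
      IsFinMeasPartition F₁ Ap ∧ IsFinMeasPartition F₂ Bp ∧
      r = (1 / 2) * ∑ i : Fin nA, ∑ j : Fin nB,
        |(μ (Ap i ∩ Bp j)).toReal - (μ (Ap i)).toReal * (μ (Bp j)).toReal| } := by
    refine ⟨1, 1, fun _ => Set.univ, fun _ => Set.univ,
      trivPartition F₁, trivPartition F₂, ?_⟩
    simp [measure_univ]
  have hnonneg : (0:ℝ) ≤ betaMix μ F₁ F₂ := le_csSup hbdd h0mem
  unfold betaMix
  refine Real.sSup_le ?_ hnonneg
  rintro r ⟨nA, nC, Ap, Cp, hAp, hCp, rfl⟩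
  set c : Fin nA → ℝ := fun i => (μ (Ap i)).toReal with hc
  set g : Fin nA → Ω → ℝ := fun i => μ[(Ap i).indicator (fun _ => (1:ℝ)) | F₂] with hgdef
  have hkey : ∀ i C, MeasurableSet[A ⊔ F₂] C → ∫ x in C, g i x ∂μ = (μ (Ap i ∩ C)).toReal :=
    fun i => condexp_setIntegral_join hF₁ hF₂ hA hindep (hAp.1 i)
  have hgmeas : ∀ i, Measurable[F₂] (g i) := fun i => stronglyMeasurable_condExp.measurable
  have hgint : ∀ i, Integrable (g i) μ := fun i => integrable_condExp
  have hint : ∀ i, Integrable (fun x => g i x - c i) μ :=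
    fun i => (hgint i).sub (integrable_const _)
  have hsub : ∀ i C, MeasurableSet[A ⊔ F₂] C →
      ∫ x in C, (g i x - c i) ∂μ = (μ (Ap i ∩ C)).toReal - c i * (μ C).toReal := by
    intro i C hC
    rw [integral_sub ((hgint i).integrableOn)
      (integrableOn_const (measure_ne_top μ C)), hkey i C hC, setIntegral_const,
      smul_eq_mul, mul_comm]
    rfl
  -- the sign partition
  let T : (Fin nA → Bool) → Set Ω := fun σ =>
    ⋂ i, if σ i then {x | c i ≤ g i x} else {x | c i ≤ g i x}ᶜ
  have hTmeas : ∀ σ, MeasurableSet[F₂] (T σ) := by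
    intro σ
    refine MeasurableSet.iInter fun i => ?_
    by_cases h : σ i
    · rw [if_pos h]; exact (hgmeas i) measurableSet_Ici
    · rw [if_neg h]; exact ((hgmeas i) measurableSet_Ici).compl
  have hTmem : ∀ σ x, x ∈ T σ ↔ ∀ i, if σ i then c i ≤ g i x else ¬ (c i ≤ g i x) := by
    intro σ x
    rw [Set.mem_iInter]
    refine forall_congr' fun i => ?_
    by_cases h : σ i
    · rw [if_pos h, if_pos h]; rfl
    · rw [if_neg h, if_neg h]; exact Iff.rfl
  have hTdisj : Pairwise (Function.onFun Disjoint T) := by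
    intro σ τ hst
    obtain ⟨i, hi⟩ := Function.ne_iff.1 hst
    rw [Function.onFun, Set.disjoint_left]
    intro x hxσ hxτ
    have h1 := (hTmem σ x).1 hxσ i
    have h2 := (hTmem τ x).1 hxτ i
    by_cases hσ : σ i = true <;> by_cases hτ : τ i = true
    · exact hi (by rw [hσ, hτ])
    · rw [if_pos hσ] at h1; rw [if_neg hτ] at h2; exact h2 h1
    · rw [if_neg hσ] at h1; rw [if_pos hτ] at h2; exact h1 h2
    · rw [Bool.not_eq_true] at hσ hτ; exact hi (by rw [hσ, hτ])
  have hTcover : (⋃ σ, T σ) = Set.univ := by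
    ext x
    simp only [Set.mem_iUnion, Set.mem_univ, iff_true]
    refine ⟨fun i => decide (c i ≤ g i x), (hTmem _ x).2 fun i => ?_⟩
    by_cases h : c i ≤ g i x <;> simp [h]
  -- index the sign partition by `Fin`
  let nB := Fintype.card (Fin nA → Bool)
  let e : Fin nB ≃ (Fin nA → Bool) := (Fintype.equivFin (Fin nA → Bool)).symm
  let B : Fin nB → Set Ω := fun j => T (e j)
  have hBpart : IsFinMeasPartition F₂ B := by
    refine ⟨fun j => hTmeas (e j), fun j k hjk => hTdisj fun h => hjk (e.injective h), ?_⟩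
    rw [show (⋃ j, B j) = ⋃ σ, T σ from e.surjective.iUnion_comp T, hTcover]
  have hBm' : ∀ j, MeasurableSet[A ⊔ F₂] (B j) :=
    fun j => (le_sup_right : F₂ ≤ A ⊔ F₂) _ (hBpart.1 j)
  have hCm' : ∀ k, MeasurableSet[A ⊔ F₂] (Cp k) := hCp.1
  -- the central estimate, for each `i`
  have habs : ∀ i, ∑ k, |(μ (Ap i ∩ Cp k)).toReal - c i * (μ (Cp k)).toReal|
      ≤ ∑ j, |(μ (Ap i ∩ B j)).toReal - c i * (μ (B j)).toReal| := by
    intro i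
    set h : Ω → ℝ := fun x => g i x - c i with hhdef
    have step1 : ∑ k, |∫ x in Cp k, h x ∂μ| ≤ ∫ x, |h x| ∂μ := by
      have e1 : ∀ k, |∫ x in Cp k, h x ∂μ| ≤ ∫ x in Cp k, |h x| ∂μ := fun k => by
        simpa [Real.norm_eq_abs] using
          norm_integral_le_integral_norm (μ := μ.restrict (Cp k)) h
      refine (Finset.sum_le_sum fun k _ => e1 k).trans ?_
      have e2 : ∫ x in ⋃ k ∈ Finset.univ, Cp k, |h x| ∂μ = ∑ k, ∫ x in Cp k, |h x| ∂μ :=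
        integral_biUnion_finset Finset.univ (fun k _ => hm' _ (hCm' k))
          (fun k _ l _ hkl => hCp.2.1 hkl) (fun k _ => (hint i).abs.integrableOn)
      have e3 : (⋃ k ∈ Finset.univ, Cp k) = Set.univ := by
        rw [show (⋃ k ∈ Finset.univ, Cp k) = ⋃ k, Cp k by simp, hCp.2.2]
      rw [← e2, e3, Measure.restrict_univ]
    have step2 : ∫ x, |h x| ∂μ = ∑ j, |∫ x in B j, h x ∂μ| := by
      have e2 : ∫ x in ⋃ j ∈ Finset.univ, B j, |h x| ∂μ = ∑ j, ∫ x in B j, |h x| ∂μ :=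
        integral_biUnion_finset Finset.univ (fun j _ => hm' _ (hBm' j))
          (fun j _ l _ hjl => hBpart.2.1 hjl) (fun j _ => (hint i).abs.integrableOn)
      have e3 : (⋃ j ∈ Finset.univ, B j) = Set.univ := by
        rw [show (⋃ j ∈ Finset.univ, B j) = ⋃ j, B j by simp, hBpart.2.2]
      calc ∫ x, |h x| ∂μ = ∫ x in Set.univ, |h x| ∂μ := by rw [Measure.restrict_univ]
        _ = ∫ x in ⋃ j ∈ Finset.univ, B j, |h x| ∂μ := by rw [e3]
        _ = ∑ j, ∫ x in B j, |h x| ∂μ := e2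
        _ = ∑ j, |∫ x in B j, h x ∂μ| := by
            refine Finset.sum_congr rfl fun j _ => ?_
            have hmeasBj : MeasurableSet[m] (B j) := hF₂ _ (hBpart.1 j)
            by_cases hσ : e j i
            · have hpos : ∀ x ∈ B j, 0 ≤ h x := by
                intro x hx
                have h1 := (hTmem (e j) x).1 hx i
                rw [if_pos hσ] at h1
                simpa [hhdef, sub_nonneg] using h1
              rw [setIntegral_congr_fun hmeasBj fun x hx => abs_of_nonneg (hpos x hx),
                abs_of_nonneg (setIntegral_nonneg hmeasBj hpos)]
            · have hneg : ∀ x ∈ B j, h x ≤ 0 := by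
                intro x hx
                have h1 := (hTmem (e j) x).1 hx i
                rw [if_neg hσ] at h1
                have h2 := le_of_not_ge h1
                simpa [hhdef, sub_nonpos] using h2
              rw [setIntegral_congr_fun hmeasBj fun x hx => abs_of_nonpos (hneg x hx),
                integral_neg, abs_of_nonpos (setIntegral_nonpos hmeasBj hneg)]
    have lhs_eq : ∀ k, (μ (Ap i ∩ Cp k)).toReal - c i * (μ (Cp k)).toReal
        = ∫ x in Cp k, h x ∂μ := fun k => (hsub i _ (hCm' k)).symm
    have rhs_eq : ∀ j, (μ (Ap i ∩ B j)).toReal - c i * (μ (B j)).toReal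
        = ∫ x in B j, h x ∂μ := fun j => (hsub i _ (hBm' j)).symm
    calc ∑ k, |(μ (Ap i ∩ Cp k)).toReal - c i * (μ (Cp k)).toReal|
        = ∑ k, |∫ x in Cp k, h x ∂μ| := by
          exact Finset.sum_congr rfl fun k _ => by rw [lhs_eq k]
      _ ≤ ∫ x, |h x| ∂μ := step1
      _ = ∑ j, |∫ x in B j, h x ∂μ| := step2
      _ = ∑ j, |(μ (Ap i ∩ B j)).toReal - c i * (μ (B j)).toReal| :=
          Finset.sum_congr rfl fun j _ => by rw [rhs_eq j]
  have hfinal : ∑ i, ∑ k, |(μ (Ap i ∩ Cp k)).toReal - c i * (μ (Cp k)).toReal|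
      ≤ ∑ i, ∑ j, |(μ (Ap i ∩ B j)).toReal - c i * (μ (B j)).toReal| :=
    Finset.sum_le_sum fun i _ => habs i
  calc (1 / 2) * ∑ i, ∑ k, |(μ (Ap i ∩ Cp k)).toReal - c i * (μ (Cp k)).toReal|
      ≤ (1 / 2) * ∑ i, ∑ j, |(μ (Ap i ∩ B j)).toReal - c i * (μ (B j)).toReal| := by
        linarith
    _ ≤ betaMix μ F₁ F₂ := le_csSup hbdd ⟨nA, nB, Ap, B, hAp, hBpart, rfl⟩
end

section
/- Fix m > 0 and q ∈ ℕ⁺, and positive integers q₁ ≥ q₂ ≥ ... ≥ q_S with Σ_s q_s = q. Then the number τ^m_{q₁,...,q_S} of vectors i ∈ I_n^q whose m-profile equals (q₁,...,q_S) satisfies τ^m_{q₁,...,q_S} ≤ C · n^S · η_m^{q−S}, where C depends only on (q₁,...,q_S), n = |I_n|, and η_m = max_i |N_i^m| is the maximal m-neighbourhood size. -/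
open scoped Classical

/-- The multiset of sizes of the equivalence classes of the `m`-connectedness relation
among the components of a vector `v : Fin q → I` (classes taken as subsets of positions,
generated by `a ~ b ↔ dist (v a) (v b) ≤ m`). -/
noncomputable def classSizes {I : Type*} [MetricSpace I] {q : ℕ} (m : ℝ) (v : Fin q → I) :
    Multiset ℕ :=
  ((Finset.univ.image fun a : Fin q =>
      {b : Fin q | Relation.EqvGen (fun x y : Fin q => dist (v x) (v y) ≤ m) a b}).val).map
    fun C => (Finset.univ.filter fun a : Fin q => a ∈ C).card

/-- The `m`-profile of a vector of indices: the sizes of its `m`-connectedness classes,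
arranged in decreasing order. -/
noncomputable def mProfile {I : Type*} [MetricSpace I] {q : ℕ} (m : ℝ) (v : Fin q → I) :
    List ℕ :=
  (Multiset.sort (classSizes m v) (· ≤ ·)).reverse

namespace TauBound

lemma countT {I : Type} [Fintype I] {q : ℕ} (N : I → Finset I)
    (T : Fin q → Fin q) (hT : ∀ a, ∃ k, T (T^[k] a) = T^[k] a) :
    (Finset.univ.filter fun v : Fin q → I => ∀ a, T a ≠ a → v a ∈ N (v (T a))).card ≤
      Fintype.card I ^ (Finset.univ.filter fun a : Fin q => T a = a).card *
        (Finset.univ.sup fun i : I => (N i).card) ^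
          (q - (Finset.univ.filter fun a : Fin q => T a = a).card) := by
  classical
  set FP := Finset.univ.filter fun a : Fin q => T a = a with hFP
  set η := Finset.univ.sup fun i : I => (N i).card with hη
  set η' := max η 1 with hη'
  have hη'pos : 0 < η' := lt_of_lt_of_le Nat.zero_lt_one (le_max_right _ _)
  have hηle : ∀ i : I, (N i).card ≤ η := fun i => Finset.le_sup (f := fun i : I => (N i).card) (Finset.mem_univ i)
  by_cases h0 : η = 0 ∧ FP ≠ Finset.univ
  · -- the filtered set is empty
    obtain ⟨h0η, h0FP⟩ := h0
    have : ∃ a : Fin q, T a ≠ a := by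
      by_contra h
      push_neg at h
      exact h0FP (by simp [hFP, h])
    obtain ⟨a, ha⟩ := this
    have : (Finset.univ.filter fun v : Fin q → I => ∀ a, T a ≠ a → v a ∈ N (v (T a))) = ∅ := by
      rw [Finset.filter_eq_empty_iff]
      intro v _ hv
      have h1 := hv a ha
      have h2 : (N (v (T a))).card = 0 := le_antisymm (h0η ▸ hηle _) (Nat.zero_le _)
      rw [Finset.card_eq_zero] at h2
      simp [h2] at h1
    simp [this]
  · -- injection into (FP → I) × (FPᶜ → Fin η')
    have key : (Finset.univ.filter fun v : Fin q → I =>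
        ∀ a, T a ≠ a → v a ∈ N (v (T a))).card ≤
        Fintype.card ((FP → I) × ((FPᶜ : Finset (Fin q)) → Fin η')) := by
      rw [← Finset.card_univ]
      refine Finset.card_le_card_of_injOn
        (fun v => (fun a : FP => v a,
          fun a : (FPᶜ : Finset (Fin q)) =>
            if h : (N (v (T a))).toList.idxOf (v a) < η' then ⟨_, h⟩ else ⟨0, hη'pos⟩))
        (fun v _ => Finset.mem_univ _) ?_
      intro v hv w hw he
      simp only [Finset.coe_filter, Finset.mem_univ, true_and, Set.mem_setOf_eq] at hv hw
      have hfst := congrArg Prod.fst he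
      have hsnd := congrArg Prod.snd he
      simp only at hfst hsnd
      have main : ∀ n : ℕ, ∀ a : Fin q, Nat.find (hT a) ≤ n → v a = w a := by
        intro n
        induction n with
        | zero =>
          intro a ha
          have h0 : T a = a := by
            have hs := Nat.find_spec (hT a)
            rwa [Nat.le_zero.mp ha, Function.iterate_zero_apply] at hs
          exact congrFun hfst ⟨a, by simp [hFP, h0]⟩
        | succ n ih =>
          intro a ha
          by_cases hfa : T a = a
          · exact congrFun hfst ⟨a, by simp [hFP, hfa]⟩
          · have hne : Nat.find (hT a) ≠ 0 := by
              intro h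
              apply hfa
              have hs := Nat.find_spec (hT a)
              rwa [h, Function.iterate_zero_apply] at hs
            have hfind : Nat.find (hT (T a)) ≤ n := by
              have h1 := Nat.find_spec (hT a)
              have h2 : T^[Nat.find (hT a)] a = T^[Nat.find (hT a) - 1] (T a) := by
                conv_lhs => rw [← Nat.succ_pred_eq_of_ne_zero hne]
                rw [Function.iterate_succ_apply, Nat.pred_eq_sub_one]
              rw [h2] at h1
              have h3 : Nat.find (hT (T a)) ≤ Nat.find (hT a) - 1 := Nat.find_le h1
              omega
            have hTa : v (T a) = w (T a) := ih (T a) hfind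
            have haC : a ∈ (FPᶜ : Finset (Fin q)) := by simp [hFP, hfa]
            have he2 := congrFun hsnd ⟨a, haC⟩
            have hv2 : v a ∈ N (v (T a)) := hv a hfa
            have hw2 : w a ∈ N (w (T a)) := hw a hfa
            have hltv : (N (v (T a))).toList.idxOf (v a) < η' := by
              calc (N (v (T a))).toList.idxOf (v a)
                  < (N (v (T a))).toList.length :=
                    List.idxOf_lt_length_iff.mpr (Finset.mem_toList.mpr hv2)
                _ = (N (v (T a))).card := Finset.length_toList _
                _ ≤ η := hηle _
                _ ≤ η' := le_max_left _ _
            have hltw : (N (w (T a))).toList.idxOf (w a) < η' := by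
              calc (N (w (T a))).toList.idxOf (w a)
                  < (N (w (T a))).toList.length :=
                    List.idxOf_lt_length_iff.mpr (Finset.mem_toList.mpr hw2)
                _ = (N (w (T a))).card := Finset.length_toList _
                _ ≤ η := hηle _
                _ ≤ η' := le_max_left _ _
            rw [dif_pos hltv, dif_pos hltw] at he2
            have hidx : (N (v (T a))).toList.idxOf (v a) =
                (N (w (T a))).toList.idxOf (w a) := by
              simpa using congrArg Fin.val he2
            rw [← hTa] at hidx hw2
            exact (List.idxOf_inj (Finset.mem_toList.mpr hv2)).mp hidx
      funext a
      exact main (Nat.find (hT a)) a le_rfl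
    have hcard : Fintype.card ((FP → I) × ((FPᶜ : Finset (Fin q)) → Fin η')) =
        Fintype.card I ^ FP.card * η' ^ (q - FP.card) := by
      rw [Fintype.card_prod, Fintype.card_fun, Fintype.card_fun, Fintype.card_coe,
        Fintype.card_coe, Fintype.card_fin, Finset.card_compl, Fintype.card_fin]
    rw [hcard] at key
    refine key.trans ?_
    push_neg at h0
    by_cases hηz : η = 0
    · have hFPu : FP = Finset.univ := by
        by_contra h
        exact h (h0 hηz ▸ rfl) |>.elim
      have hq : q - FP.card = 0 := by
        rw [hFPu, Finset.card_univ, Fintype.card_fin, Nat.sub_self]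
      simp [hq]
    · have : η' = η := max_eq_left (Nat.one_le_iff_ne_zero.mpr hηz)
      rw [this]

def chainLen {α : Type*} (r : α → α → Prop) : ℕ → α → α → Prop
  | 0, x, y => x = y
  | k+1, x, y => ∃ z, chainLen r k x z ∧ r z y

lemma reflTransGen_chainLen {α : Type*} {r : α → α → Prop} {x y : α}
    (h : Relation.ReflTransGen r x y) : ∃ k, chainLen r k x y := by
  induction h with
  | refl => exact ⟨0, rfl⟩
  | tail _ hzy ih => obtain ⟨k, hk⟩ := ih; exact ⟨k + 1, _, hk, hzy⟩

lemma chainLen_eqvGen {α : Type*} {r : α → α → Prop} :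
    ∀ {k : ℕ} {x y : α}, chainLen r k x y → Relation.EqvGen r x y
  | 0, x, _, h => h ▸ Relation.EqvGen.refl x
  | _+1, _, _, ⟨_, hz, hr⟩ =>
      Relation.EqvGen.trans _ _ _ (chainLen_eqvGen hz) (Relation.EqvGen.rel _ _ hr)

lemma eqvGen_reflTransGen {α : Type*} {r : α → α → Prop} (hsymm : Symmetric r)
    {x y : α} (h : Relation.EqvGen r x y) : Relation.ReflTransGen r x y := by
  induction h with
  | rel a b h => exact Relation.ReflTransGen.single h
  | refl a => exact Relation.ReflTransGen.refl
  | symm a b _ ih => haveI : Std.Symm r := ⟨hsymm⟩; exact Std.Symm.symm _ _ ih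
  | trans a b c _ _ ih1 ih2 => exact ih1.trans ih2

lemma existsT {I : Type} [MetricSpace I] {q : ℕ} {m : ℝ} (v : Fin q → I) :
    ∃ T : Fin q → Fin q,
      (∀ a, ∃ k, T (T^[k] a) = T^[k] a) ∧
      (∀ a, T a ≠ a → dist (v (T a)) (v a) ≤ m) ∧
      (Finset.univ.filter fun a => T a = a).card =
        (Finset.univ.image fun a : Fin q =>
          {b : Fin q | Relation.EqvGen (fun x y : Fin q => dist (v x) (v y) ≤ m) a b}).card := by
  classical
  set r := fun x y : Fin q => dist (v x) (v y) ≤ m with hr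
  have hsymm : Symmetric r := fun x y h => by
    simpa only [hr, dist_comm] using h
  set E := fun a : Fin q => Finset.univ.filter fun b => Relation.EqvGen r a b with hE
  have hne : ∀ a, (E a).Nonempty :=
    fun a => ⟨a, Finset.mem_filter.mpr ⟨Finset.mem_univ _, Relation.EqvGen.refl a⟩⟩
  set ρ := fun a => (E a).min' (hne a) with hρ
  have hρmem : ∀ a, Relation.EqvGen r a (ρ a) := by
    intro a
    have := (E a).min'_mem (hne a)
    exact (Finset.mem_filter.mp this).2
  have hEeq : ∀ {a b}, Relation.EqvGen r a b → E a = E b := by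
    intro a b h
    ext c
    simp only [hE, Finset.mem_filter, Finset.mem_univ, true_and]
    exact ⟨fun hc => Relation.EqvGen.trans _ _ _ (Relation.EqvGen.symm _ _ h) hc,
      fun hc => Relation.EqvGen.trans _ _ _ h hc⟩
  have hρeq : ∀ {a b}, Relation.EqvGen r a b → ρ a = ρ b := by
    intro a b h
    have hE' := hEeq h
    simp only [hρ]
    congr 1
  have hchain : ∀ a, ∃ k, chainLen r k (ρ a) a :=
    fun a => reflTransGen_chainLen (eqvGen_reflTransGen hsymm
      (Relation.EqvGen.symm _ _ (hρmem a)))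
  set dep := fun a => Nat.find (hchain a) with hdepdef
  have hdep : ∀ a, chainLen r (dep a) (ρ a) a := fun a => Nat.find_spec (hchain a)
  have hmin : ∀ a k, k < dep a → ¬ chainLen r k (ρ a) a := fun a k hk => Nat.find_min (hchain a) hk
  have hzex : ∀ a, dep a ≠ 0 → ∃ z, chainLen r (dep a - 1) (ρ a) z ∧ r z a := by
    intro a h
    have h1 := hdep a
    rw [show dep a = (dep a - 1) + 1 by omega] at h1
    exact h1
  set T := fun a => if h : dep a = 0 then a else (hzex a h).choose with hT
  have hTz : ∀ a (h : dep a ≠ 0), chainLen r (dep a - 1) (ρ a) (T a) ∧ r (T a) a := by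
    intro a h
    simp only [hT, dif_neg h]
    exact (hzex a h).choose_spec
  have h0 : ∀ a, dep a = 0 ↔ ρ a = a := by
    intro a
    constructor
    · intro h; have := hdep a; rwa [h] at this
    · intro h; exact Nat.find_eq_zero (hchain a) |>.mpr h
  have hfix : ∀ a, T a = a ↔ dep a = 0 := by
    intro a
    constructor
    · intro h
      by_contra hd
      have h1 := (hTz a hd).1
      rw [h] at h1
      exact hmin a (dep a - 1) (by omega) h1
    · intro h; simp [hT, dif_pos h]
  have hdec : ∀ a, dep a ≠ 0 → dep (T a) < dep a := by
    intro a h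
    have hc := (hTz a h).1
    have hρT : ρ (T a) = ρ a := by
      have h1 : Relation.EqvGen r (ρ a) (T a) := chainLen_eqvGen hc
      have h2 : ρ (ρ a) = ρ (T a) := hρeq h1
      have h3 : ρ a = ρ (ρ a) := hρeq (hρmem a)
      rw [← h3] at h2
      exact h2.symm
    have h4 : dep (T a) ≤ dep a - 1 := by
      apply Nat.find_le
      rw [hρT]
      exact hc
    omega
  refine ⟨T, ?_, ?_, ?_⟩
  · intro a
    have : ∀ n, ∀ a, dep a ≤ n → ∃ k, T (T^[k] a) = T^[k] a := by
      intro n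
      induction n with
      | zero => intro a ha; exact ⟨0, by simpa using (hfix a).mpr (Nat.le_zero.mp ha)⟩
      | succ n ih =>
        intro a ha
        by_cases h : dep a = 0
        · exact ⟨0, by simpa using (hfix a).mpr h⟩
        · obtain ⟨k, hk⟩ := ih (T a) (by have := hdec a h; omega)
          exact ⟨k + 1, by rw [Function.iterate_succ_apply]; exact hk⟩
    exact this (dep a) a le_rfl
  · intro a ha
    have h : dep a ≠ 0 := fun h => ha ((hfix a).mpr h)
    exact (hTz a h).2
  · refine Finset.card_bij (fun a _ => {b : Fin q | Relation.EqvGen r a b}) ?_ ?_ ?_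
    · intro a _
      exact Finset.mem_image.mpr ⟨a, Finset.mem_univ _, rfl⟩
    · intro a1 ha1 a2 ha2 hset
      have h1 : ρ a1 = a1 := (h0 a1).mp ((hfix a1).mp (Finset.mem_filter.mp ha1).2)
      have h2 : ρ a2 = a2 := (h0 a2).mp ((hfix a2).mp (Finset.mem_filter.mp ha2).2)
      have : a2 ∈ {b : Fin q | Relation.EqvGen r a1 b} := by
        rw [hset]; exact Relation.EqvGen.refl a2
      have := hρeq this
      rw [h1, h2] at this
      exact this
    · intro C hC
      obtain ⟨x, _, hx⟩ := Finset.mem_image.mp hC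
      refine ⟨ρ x, Finset.mem_filter.mpr ⟨Finset.mem_univ _, ?_⟩, ?_⟩
      · apply (hfix (ρ x)).mpr
        apply (h0 (ρ x)).mpr
        exact (hρeq (hρmem x)).symm
      · rw [← hx]
        ext b
        simp only [Set.mem_setOf_eq]
        exact ⟨fun hb => Relation.EqvGen.trans _ _ _ (hρmem x) hb,
          fun hb => Relation.EqvGen.trans _ _ _ (Relation.EqvGen.symm _ _ (hρmem x)) hb⟩

end TauBound

/-- For a partition `q₁ ≥ ... ≥ q_S > 0` of `q`, the number `τ^m_{q₁,...,q_S}` of vectors in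
`I_n^q` with `m`-profile `(q₁,...,q_S)` is at most `C · n^S · η_m^{q−S}`, where `C` depends
only on `(q₁,...,q_S)`, `n = |I_n|` and `η_m` is the maximal `m`-neighbourhood size. -/
theorem card_mProfile_le {q S : ℕ} (L : List ℕ) (hlen : L.length = S)
    (hpos : ∀ x ∈ L, 0 < x) (hsorted : L.Pairwise (· ≥ ·)) (hsum : L.sum = q) :
    ∃ C : ℝ, 0 < C ∧
      ∀ (I : Type) (_ : Fintype I) (_ : MetricSpace I) (m : ℝ), 0 < m →
        ((Finset.univ.filter fun v : Fin q → I => mProfile m v = L).card : ℝ) ≤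
          C * (Fintype.card I : ℝ) ^ S *
            ((Finset.univ.sup (fun i : I =>
              (Finset.univ.filter fun j : I => dist i j ≤ m).card) : ℕ) : ℝ) ^ (q - S) := by
  classical
  refine ⟨((q ^ q : ℕ) : ℝ), ?_, ?_⟩
  · have h : 0 < q ^ q := by
      rcases Nat.eq_zero_or_pos q with h | h
      · simp [h]
      · exact pow_pos h q
    exact_mod_cast h
  intro I _ _ m _
  have main : (Finset.univ.filter fun v : Fin q → I => mProfile m v = L).card ≤
      q ^ q * (Fintype.card I ^ S *
        (Finset.univ.sup fun i : I =>
          (Finset.univ.filter fun j : I => dist i j ≤ m).card) ^ (q - S)) := by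
    set N : I → Finset I := fun i => Finset.univ.filter fun j : I => dist i j ≤ m with hN
    have hsub : (Finset.univ.filter fun v : Fin q → I => mProfile m v = L) ⊆
        Finset.univ.biUnion fun T : Fin q → Fin q =>
          Finset.univ.filter fun v : Fin q → I =>
            (∀ a, ∃ k, T (T^[k] a) = T^[k] a) ∧
            ((Finset.univ.filter fun a : Fin q => T a = a).card = S) ∧
            (∀ a, T a ≠ a → v a ∈ N (v (T a))) := by
      intro v hv
      have hv' : mProfile m v = L := (Finset.mem_filter.mp hv).2
      obtain ⟨T, hT1, hT2, hT3⟩ := TauBound.existsT (m := m) v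
      refine Finset.mem_biUnion.mpr ⟨T, Finset.mem_univ _, Finset.mem_filter.mpr
        ⟨Finset.mem_univ _, hT1, ?_, ?_⟩⟩
      · rw [hT3]
        have hlp : (mProfile m v).length =
            (Finset.univ.image fun a : Fin q =>
              {b : Fin q | Relation.EqvGen
                (fun x y : Fin q => dist (v x) (v y) ≤ m) a b}).card := by
          rw [mProfile, List.length_reverse, Multiset.length_sort, classSizes,
            Multiset.card_map]
          rfl
        rw [← hlp, hv', hlen]
      · intro a ha
        simp only [hN, Finset.mem_filter, Finset.mem_univ, true_and]
        exact hT2 a ha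
    calc (Finset.univ.filter fun v : Fin q → I => mProfile m v = L).card
        ≤ (Finset.univ.biUnion fun T : Fin q → Fin q =>
            Finset.univ.filter fun v : Fin q → I =>
              (∀ a, ∃ k, T (T^[k] a) = T^[k] a) ∧
              ((Finset.univ.filter fun a : Fin q => T a = a).card = S) ∧
              (∀ a, T a ≠ a → v a ∈ N (v (T a)))).card := Finset.card_le_card hsub
      _ ≤ ∑ T : Fin q → Fin q,
            (Finset.univ.filter fun v : Fin q → I =>
              (∀ a, ∃ k, T (T^[k] a) = T^[k] a) ∧
              ((Finset.univ.filter fun a : Fin q => T a = a).card = S) ∧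
              (∀ a, T a ≠ a → v a ∈ N (v (T a)))).card := Finset.card_biUnion_le
      _ ≤ ∑ _T : Fin q → Fin q,
            Fintype.card I ^ S *
              (Finset.univ.sup fun i : I => (N i).card) ^ (q - S) := by
          refine Finset.sum_le_sum fun T _ => ?_
          by_cases h1 : (∀ a, ∃ k, T (T^[k] a) = T^[k] a) ∧
              (Finset.univ.filter fun a : Fin q => T a = a).card = S
          · have hsub2 : (Finset.univ.filter fun v : Fin q → I =>
                (∀ a, ∃ k, T (T^[k] a) = T^[k] a) ∧
                ((Finset.univ.filter fun a : Fin q => T a = a).card = S) ∧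
                (∀ a, T a ≠ a → v a ∈ N (v (T a)))) ⊆
                Finset.univ.filter fun v : Fin q → I =>
                  ∀ a, T a ≠ a → v a ∈ N (v (T a)) := by
              intro v hv
              simp only [Finset.mem_filter, Finset.mem_univ, true_and] at hv ⊢
              exact hv.2.2
            have hbound := TauBound.countT N T h1.1
            rw [h1.2] at hbound
            exact le_trans (Finset.card_le_card hsub2) hbound
          · have hemp : (Finset.univ.filter fun v : Fin q → I =>
                (∀ a, ∃ k, T (T^[k] a) = T^[k] a) ∧
                ((Finset.univ.filter fun a : Fin q => T a = a).card = S) ∧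
                (∀ a, T a ≠ a → v a ∈ N (v (T a)))) = ∅ := by
              rw [Finset.filter_eq_empty_iff]
              intro v _ hv
              exact h1 ⟨hv.1, hv.2.1⟩
            simp [hemp]
      _ = q ^ q * (Fintype.card I ^ S *
            (Finset.univ.sup fun i : I => (N i).card) ^ (q - S)) := by
          rw [Finset.sum_const, Finset.card_univ, Fintype.card_fun, Fintype.card_fin,
            smul_eq_mul]
  have hcast := (Nat.cast_le (α := ℝ)).mpr main
  push_cast at hcast
  calc ((Finset.univ.filter fun v : Fin q → I => mProfile m v = L).card : ℝ)
      ≤ _ := hcast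
    _ = _ := by push_cast; ring
end

section
/- Coupling moment bound: Let X, X̃ be random variables with X̃ independent of a random vector V, and let f, f̃ be measurable with f = f(V, X), f̃ = f(V, X̃). If J ≥ 1, δ > 0, ‖f‖_{J+δ} and ‖f̃‖_{J+δ} are finite, and E f̃ = 0 via degeneracy, then |E f| ≤ (‖f‖_{J+δ} + ‖f̃‖_{J+δ}) · P(X ≠ X̃)^{δ/(J+δ)}. -/
open MeasureTheory ProbabilityTheory

/-- **Coupling moment bound.**  If `f = F(V, X)`, `f̃ = F(V, X̃)` with `X̃` independent of `V`,
`E f̃ = 0`, and both `f, f̃ ∈ L^{J+δ}` with `J ≥ 1`, `δ > 0`, then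
`|E f| ≤ (‖f‖_{J+δ} + ‖f̃‖_{J+δ}) · P(X ≠ X̃)^{δ/(J+δ)}`. -/
theorem coupling_moment_bound {Ω α β : Type*} [MeasurableSpace Ω]
    [MeasurableSpace α] [MeasurableSpace β]
    (μ : Measure Ω) [IsProbabilityMeasure μ]
    (V : Ω → α) (X X' : Ω → β) (F : α → β → ℝ)
    (hV : Measurable V) (hX : Measurable X) (hX' : Measurable X')
    (hF : Measurable (Function.uncurry F))
    (J δ : ℝ) (hJ : 1 ≤ J) (hδ : 0 < δ)
    (hindep : IndepFun X' V μ)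
    (hf : MemLp (fun ω => F (V ω) (X ω)) (ENNReal.ofReal (J + δ)) μ)
    (hf' : MemLp (fun ω => F (V ω) (X' ω)) (ENNReal.ofReal (J + δ)) μ)
    (hmean : ∫ ω, F (V ω) (X' ω) ∂μ = 0) :
    |∫ ω, F (V ω) (X ω) ∂μ| ≤
      ((eLpNorm (fun ω => F (V ω) (X ω)) (ENNReal.ofReal (J + δ)) μ).toReal +
        (eLpNorm (fun ω => F (V ω) (X' ω)) (ENNReal.ofReal (J + δ)) μ).toReal) *
      (μ {ω | X ω ≠ X' ω}).toReal ^ (δ / (J + δ)) := by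
  set p : ℝ := J + δ with hp_def
  have hp1 : 1 < p := by simp only [hp_def]; linarith
  have hp0 : 0 < p := by linarith
  set q : ℝ := p.conjExponent with hq_def
  have hpq : p.HolderConjugate q := Real.HolderConjugate.conjExponent hp1
  have hq0 : 0 < q := hpq.symm.pos
  have h1q : 1 / q = (p - 1) / p := by
    rw [hq_def, Real.conjExponent]
    field_simp
  -- ℒp facts
  have hple : (1 : ENNReal) ≤ ENNReal.ofReal p := by
    rw [← ENNReal.ofReal_one]
    exact ENNReal.ofReal_le_ofReal hp1.le
  have hpne0 : ENNReal.ofReal p ≠ 0 := by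
    simp [ENNReal.ofReal_eq_zero, not_le, hp0]
  have hg : MemLp (fun ω => F (V ω) (X ω) - F (V ω) (X' ω)) (ENNReal.ofReal p) μ :=
    hf.sub hf'
  have hint : Integrable (fun ω => F (V ω) (X ω)) μ := hf.integrable hple
  have hint' : Integrable (fun ω => F (V ω) (X' ω)) μ := hf'.integrable hple
  -- the set and its measurable hull
  set S : Set Ω := {ω | X ω ≠ X' ω} with hS_def
  set t : Set Ω := toMeasurable μ S with ht_def
  have ht : MeasurableSet t := measurableSet_toMeasurable μ S
  have hSt : S ⊆ t := subset_toMeasurable μ S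
  have hμt : μ t = μ S := measure_toMeasurable S
  have hind : MemLp (t.indicator fun _ => (1 : ℝ)) (ENNReal.ofReal q) μ :=
    memLp_indicator_const _ ht 1 (Or.inr (measure_ne_top μ t))
  -- Step 1: `∫ f = ∫ (f - f')`
  have h1 : ∫ ω, F (V ω) (X ω) ∂μ
      = ∫ ω, (F (V ω) (X ω) - F (V ω) (X' ω)) ∂μ := by
    rw [integral_sub hint hint', hmean, sub_zero]
  -- Step 2: pointwise `|g| = ‖g‖ * ‖ind‖`
  have h2 : ∀ ω, |F (V ω) (X ω) - F (V ω) (X' ω)| =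
      ‖F (V ω) (X ω) - F (V ω) (X' ω)‖ * ‖t.indicator (fun _ => (1 : ℝ)) ω‖ := by
    intro ω
    by_cases hω : X ω = X' ω
    · simp [hω]
    · have : ω ∈ t := hSt hω
      simp [Set.indicator_of_mem this, Real.norm_eq_abs]
  -- Hölder's inequality
  have h3 : ∫ ω, |F (V ω) (X ω) - F (V ω) (X' ω)| ∂μ ≤
      (∫ ω, ‖F (V ω) (X ω) - F (V ω) (X' ω)‖ ^ p ∂μ) ^ (1 / p) *
      (∫ ω, ‖t.indicator (fun _ => (1 : ℝ)) ω‖ ^ q ∂μ) ^ (1 / q) := by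
    calc ∫ ω, |F (V ω) (X ω) - F (V ω) (X' ω)| ∂μ
        = ∫ ω, ‖F (V ω) (X ω) - F (V ω) (X' ω)‖ * ‖t.indicator (fun _ => (1 : ℝ)) ω‖ ∂μ :=
          integral_congr_ae (Filter.Eventually.of_forall h2)
      _ ≤ _ := integral_mul_norm_le_Lp_mul_Lq hpq hg hind
  -- identify the first factor with the eLpNorm
  have h4 : (∫ ω, ‖F (V ω) (X ω) - F (V ω) (X' ω)‖ ^ p ∂μ) ^ (1 / p)
      = (eLpNorm (fun ω => F (V ω) (X ω) - F (V ω) (X' ω)) (ENNReal.ofReal p) μ).toReal := by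
    rw [hg.eLpNorm_eq_integral_rpow_norm hpne0 ENNReal.ofReal_ne_top,
      ENNReal.toReal_ofReal (by positivity), ENNReal.toReal_ofReal hp0.le, one_div]
  -- compute the second factor
  have h5 : (∫ ω, ‖t.indicator (fun _ => (1 : ℝ)) ω‖ ^ q ∂μ) ^ (1 / q)
      = (μ S).toReal ^ (1 / q) := by
    have hpt : ∀ ω, ‖t.indicator (fun _ => (1 : ℝ)) ω‖ ^ q
        = t.indicator (fun _ => (1 : ℝ)) ω := by
      intro ω
      by_cases hω : ω ∈ t
      · simp [Set.indicator_of_mem hω]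
      · simp [Set.indicator_of_notMem hω, Real.zero_rpow hq0.ne']
    rw [integral_congr_ae (Filter.Eventually.of_forall hpt), integral_indicator_const _ ht]
    simp [measureReal_def, hμt]
  -- exponent comparison, using `μ S ≤ 1`
  have h6 : (μ S).toReal ^ (1 / q) ≤ (μ S).toReal ^ (δ / p) := by
    rcases eq_or_lt_of_le (ENNReal.toReal_nonneg : (0:ℝ) ≤ (μ S).toReal) with h | h
    · rw [← h, Real.zero_rpow (by positivity), Real.zero_rpow (by positivity)]
    · refine Real.rpow_le_rpow_of_exponent_ge h ?_ ?_
      · calc (μ S).toReal ≤ (1 : ENNReal).toReal :=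
              ENNReal.toReal_mono ENNReal.one_ne_top prob_le_one
          _ = 1 := by simp
      · rw [h1q]
        have hδp : δ ≤ p - 1 := by simp only [hp_def]; linarith
        exact div_le_div_of_nonneg_right hδp hp0.le
  -- triangle inequality for the eLpNorm
  have h7 : (eLpNorm (fun ω => F (V ω) (X ω) - F (V ω) (X' ω)) (ENNReal.ofReal p) μ).toReal ≤
      (eLpNorm (fun ω => F (V ω) (X ω)) (ENNReal.ofReal p) μ).toReal +
      (eLpNorm (fun ω => F (V ω) (X' ω)) (ENNReal.ofReal p) μ).toReal := by
    rw [← ENNReal.toReal_add hf.eLpNorm_ne_top hf'.eLpNorm_ne_top]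
    exact ENNReal.toReal_mono
      (by simp [ENNReal.add_ne_top, hf.eLpNorm_ne_top, hf'.eLpNorm_ne_top])
      (eLpNorm_sub_le hf.aestronglyMeasurable hf'.aestronglyMeasurable hple)
  -- put everything together
  calc |∫ ω, F (V ω) (X ω) ∂μ|
      = |∫ ω, (F (V ω) (X ω) - F (V ω) (X' ω)) ∂μ| := by rw [h1]
    _ ≤ ∫ ω, |F (V ω) (X ω) - F (V ω) (X' ω)| ∂μ := by
        simpa [Real.norm_eq_abs] using
          norm_integral_le_integral_norm (fun ω => F (V ω) (X ω) - F (V ω) (X' ω)) (μ := μ)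
    _ ≤ (∫ ω, ‖F (V ω) (X ω) - F (V ω) (X' ω)‖ ^ p ∂μ) ^ (1 / p) *
        (∫ ω, ‖t.indicator (fun _ => (1 : ℝ)) ω‖ ^ q ∂μ) ^ (1 / q) := h3
    _ = (eLpNorm (fun ω => F (V ω) (X ω) - F (V ω) (X' ω)) (ENNReal.ofReal p) μ).toReal *
        (μ S).toReal ^ (1 / q) := by rw [h4, h5]
    _ ≤ ((eLpNorm (fun ω => F (V ω) (X ω)) (ENNReal.ofReal p) μ).toReal +
        (eLpNorm (fun ω => F (V ω) (X' ω)) (ENNReal.ofReal p) μ).toReal) *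
        (μ S).toReal ^ (δ / p) := by
        apply mul_le_mul h7 h6 (Real.rpow_nonneg ENNReal.toReal_nonneg _)
        positivity
end
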